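/- Let F ⊆ E ⊆ E' be a tower of nonarchimedean local fields with E/F and E'/F finite tamely ramified extensions, and let C_E and C_{E'} be defined with respect to the same fixed uniformizer π_F of F. Then C_E ⊆ C_{E'} as subgroups of E'^×. -/

import Mathlib

/-- A surjective additive `ℤ`-valued valuation on a field `K`, written additively with
values in `WithTop ℤ` (with `v 0 = ⊤`). -/
structure IsZValuation (K : Type*) [Field K] (v : K → WithTop ℤ) : Prop where
  map_zero : v 0 = ⊤
  map_one : v 1 = 0
  map_mul : ∀ x y : K, v (x * y) = v x + v y
  min_le_map_add : ∀ x y : K, min (v x) (v y) ≤ v (x + y)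
  surjective : ∀ n : ℤ, ∃ x : K, v x = (n : WithTop ℤ)

/-- `K`, equipped with the normalized valuation `v`, is a nonarchimedean local field with
residue characteristic `p`: `v` is a surjective `ℤ`-valued valuation, `K` is (sequentially)
complete with respect to `v`, the residue field is finite (the valuation ring is covered by
finitely many residue classes), and `p` is a prime number of positive valuation (so the
residue field has characteristic `p`). -/
structure IsNonarchLocalField (K : Type*) [Field K] (v : K → WithTop ℤ) (p : ℕ) : Prop where
  isZValuation : IsZValuation K v
  complete : ∀ f : ℕ → K,
    (∀ N : ℤ, ∃ M : ℕ, ∀ m, M ≤ m → ∀ n, M ≤ n → (N : WithTop ℤ) ≤ v (f m - f n)) →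
    ∃ L : K, ∀ N : ℤ, ∃ M : ℕ, ∀ n, M ≤ n → (N : WithTop ℤ) ≤ v (f n - L)
  finiteResidue : ∃ S : Finset K, ∀ x : K, 0 ≤ v x → ∃ s ∈ S, 0 < v (x - s)
  prime : p.Prime
  v_p_pos : 0 < v (p : K)
/-- `z` is a root of unity whose order is prime to `p`. -/
def IsPrimeToRootOfUnity (p : ℕ) {K : Type*} [Monoid K] (z : K) : Prop :=
  ∃ n : ℕ, 0 < n ∧ ¬ p ∣ n ∧ z ^ n = 1

/-- The subgroup `C_E` of `Eˣ` generated by the uniformizer `πE` together with all roots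
of unity in `E` of order prime to `p`. -/
def stdGroup (p : ℕ) {E : Type*} [Field E] (πE : Eˣ) : Subgroup Eˣ :=
  Subgroup.closure ({πE} ∪ {z : Eˣ | IsPrimeToRootOfUnity p (z : E)})

/-- For a tower `F ⊆ E ⊆ E'` of finite tamely ramified extensions of
nonarchimedean local fields, with `C_E` and `C_{E'}` defined with respect to the same
uniformizer `πF` of `F`, one has `C_E ⊆ C_{E'}` (as subgroups of `E'ˣ`, via the inclusion
`E ⊆ E'`). -/
theorem stdGroup_le_stdGroup_of_tower
    (p : ℕ) (F E E' : Type*) [Field F] [Field E] [Field E']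
    [Algebra F E] [Algebra E E'] [Algebra F E'] [IsScalarTower F E E']
    [FiniteDimensional F E] [FiniteDimensional E E']
    (vF : F → WithTop ℤ) (vE : E → WithTop ℤ) (vE' : E' → WithTop ℤ)
    (hF : IsNonarchLocalField F vF p) (hE : IsNonarchLocalField E vE p)
    (hE' : IsNonarchLocalField E' vE' p)
    (e₁ e₂ : ℕ)
    (hcomp : ∀ x : F, vE (algebraMap F E x) = e₁ • vF x)
    (hcomp' : ∀ x : E, vE' (algebraMap E E' x) = e₂ • vE x)
    (htame : ¬ p ∣ e₁) (htame' : ¬ p ∣ (e₁ * e₂))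
    (πF : F) (hπF : vF πF = 1)
    (πE : Eˣ) (hπE : vE ↑πE = 1)
    (zE : E) (hzE : IsPrimeToRootOfUnity p zE)
    (hπzE : (πE : E) ^ e₁ * zE = algebraMap F E πF)
    (πE' : E'ˣ) (hπE' : vE' ↑πE' = 1)
    (zE' : E') (hzE' : IsPrimeToRootOfUnity p zE')
    (hπzE' : (πE' : E') ^ (e₁ * e₂) * zE' = algebraMap F E' πF) :
    (stdGroup p πE).map (Units.map (algebraMap E E').toMonoidHom) ≤ stdGroup p πE' := by
  classical
  obtain ⟨nE, hnE, hpnE, hzEn⟩ := hzE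
  obtain ⟨nE', hnE', hpnE', hzE'n⟩ := hzE'
  have he₁ : e₁ ≠ 0 := fun h => htame (h ▸ dvd_zero p)
  have hzEne : zE ≠ 0 := by
    intro h
    rw [h, zero_pow hnE.ne'] at hzEn
    exact one_ne_zero hzEn.symm
  have hφzE : algebraMap E E' zE ≠ 0 := by simpa using hzEne
  have hπne : ((πE' : E')) ≠ 0 := Units.ne_zero _
  have key : (algebraMap E E' (πE : E)) ^ e₁ * algebraMap E E' zE
      = (πE' : E') ^ (e₁ * e₂) * zE' := by
    have h1 := congrArg (algebraMap E E') hπzE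
    rw [map_mul, map_pow] at h1
    rw [h1, ← IsScalarTower.algebraMap_apply, hπzE']
  rw [stdGroup, MonoidHom.map_closure, Subgroup.closure_le]
  rintro _ ⟨x, hx, rfl⟩
  rcases hx with hx | hx
  · have hxπ : x = πE := hx
    subst hxπ
    set u : E'ˣ := Units.map (algebraMap E E').toMonoidHom x * (πE' ^ e₂)⁻¹ with hu
    have huval : (u : E') = algebraMap E E' (x : E) * ((πE' : E') ^ e₂)⁻¹ := by
      simp [hu]
    have h1 : (u : E') ^ e₁ * algebraMap E E' zE = zE' := by
      rw [huval, mul_pow, inv_pow, ← pow_mul, Nat.mul_comm e₂ e₁]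
      field_simp
      linear_combination key
    have h2 : (u : E') ^ e₁ = zE' * (algebraMap E E' zE)⁻¹ := by
      field_simp [← h1]
      exact h1
    have hroot : IsPrimeToRootOfUnity p ((u : E'ˣ) : E') := by
      refine ⟨e₁ * (nE * nE'), Nat.pos_of_ne_zero (by positivity), ?_, ?_⟩
      · intro hdvd
        rcases (Nat.Prime.dvd_mul hE.prime).1 hdvd with h | h
        · exact htame h
        · rcases (Nat.Prime.dvd_mul hE.prime).1 h with h' | h'
          · exact hpnE h'
          · exact hpnE' h'
      · have hz1 : (algebraMap E E' zE) ^ (nE * nE') = 1 := by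
          rw [pow_mul, ← map_pow, hzEn, map_one, one_pow]
        have hz2 : zE' ^ (nE * nE') = 1 := by
          rw [Nat.mul_comm, pow_mul, hzE'n, one_pow]
        rw [pow_mul, h2, mul_pow, inv_pow, hz1, hz2, inv_one, mul_one]
    have hdecomp : Units.map (algebraMap E E').toMonoidHom x = πE' ^ e₂ * u := by
      rw [hu, mul_comm, inv_mul_cancel_right]
    rw [hdecomp]
    have hπ'mem : πE' ∈ stdGroup p πE' :=
      Subgroup.subset_closure (Set.mem_union_left _ rfl)
    have humem : u ∈ stdGroup p πE' :=
      Subgroup.subset_closure (Set.mem_union_right _ hroot)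
    exact mul_mem (pow_mem hπ'mem e₂) humem
  · obtain ⟨n, hn, hpn, hxn⟩ := hx
    apply Subgroup.subset_closure
    apply Set.mem_union_right
    refine ⟨n, hn, hpn, ?_⟩
    have : ((Units.map (algebraMap E E').toMonoidHom x : E'ˣ) : E')
        = algebraMap E E' (x : E) := rfl
    rw [this, ← map_pow, hxn, map_one]
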